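/- Let G be a simple graph with maximum degree Δ. Then BC_k(G) holds for every k ≥ 2Δ + 3. -/

import Mathlib

open Finset

namespace Brouwer

variable {V : Type*}

/-- The sum of the `k` largest values of `f` on a finite type, expressed as the
supremum over all `k`-element subsets of the sum of `f` over the subset. -/
noncomputable def sumKLargest [Fintype V] (f : V → ℝ) (k : ℕ) : ℝ :=
  sSup { x : ℝ | ∃ T : Finset V, T.card = k ∧ ∑ i ∈ T, f i = x }

/-- The Laplacian matrix of a finite simple graph is Hermitian (real symmetric). -/
theorem lapMatrix_isHermitian [Fintype V] [DecidableEq V] (G : SimpleGraph V)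
    [DecidableRel G.Adj] : (G.lapMatrix ℝ).IsHermitian := by
  rw [Matrix.IsHermitian, Matrix.conjTranspose_eq_transpose_of_trivial]
  exact G.isSymm_lapMatrix ℝ

/-- The adjacency matrix of a finite simple graph is Hermitian (real symmetric). -/
theorem adjMatrix_isHermitian [Fintype V] [DecidableEq V] (G : SimpleGraph V)
    [DecidableRel G.Adj] : (G.adjMatrix ℝ).IsHermitian := by
  rw [Matrix.IsHermitian, Matrix.conjTranspose_eq_transpose_of_trivial]
  exact G.isSymm_adjMatrix

/-- The (multiset of) eigenvalues of the Laplacian matrix of `G`, indexed by vertices. -/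
noncomputable def lapEig [Fintype V] [DecidableEq V] (G : SimpleGraph V) : V → ℝ := by
  classical exact (lapMatrix_isHermitian G).eigenvalues

/-- The (multiset of) eigenvalues of the adjacency matrix of `G`, indexed by vertices. -/
noncomputable def adjEig [Fintype V] [DecidableEq V] (G : SimpleGraph V) : V → ℝ := by
  classical exact (adjMatrix_isHermitian G).eigenvalues

/-- `sLap G k` is `s_k(G)`, the sum of the `k` largest Laplacian eigenvalues of `G`. -/
noncomputable def sLap [Fintype V] [DecidableEq V] (G : SimpleGraph V) (k : ℕ) : ℝ :=
  sumKLargest (lapEig G) k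

/-- The number of edges of `G`. -/
noncomputable def numEdges [Fintype V] (G : SimpleGraph V) : ℕ := by
  classical exact G.edgeFinset.card

/-- `BC G k`: Brouwer's conjectured inequality `s_k(G) ≤ m + (k+1 choose 2)`. -/
def BC [Fintype V] [DecidableEq V] (G : SimpleGraph V) (k : ℕ) : Prop :=
  sLap G k ≤ numEdges G + (k + 1).choose 2

/-- Number of edges of `G` with both endpoints in `S`. -/
noncomputable def edgesWithin [Fintype V] [DecidableEq V] (G : SimpleGraph V)
    (S : Finset V) : ℕ := by
  classical exact (G.edgeFinset.filter (fun e => ∀ v ∈ e, v ∈ S)).card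

/-- The adjacency spectral radius of `G`, i.e. the largest adjacency eigenvalue. -/
noncomputable def specRad [Fintype V] [DecidableEq V] (G : SimpleGraph V) : ℝ :=
  sumKLargest (adjEig G) 1

/-- The maximum subgraph spectral density `t(G)`:
the supremum of `ρ(G[S])/|S|` over nonempty vertex subsets `S`. -/
noncomputable def maxDensity [Fintype V] [DecidableEq V] (G : SimpleGraph V) : ℝ :=
  sSup { x : ℝ | ∃ S : Finset V, S.Nonempty ∧
    x = specRad (G.induce (↑S : Set V)) / (S.card : ℝ) }

/-- Edge-edit distance between two graphs on the same vertex set. -/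
noncomputable def editDistance [Fintype V] (G H : SimpleGraph V) : ℕ := by
  classical exact (symmDiff G.edgeFinset H.edgeFinset).card

/-- A split graph: the vertex set partitions into a clique and an independent set. -/
def IsSplit (G : SimpleGraph V) : Prop :=
  ∃ C : Set V, G.IsClique C ∧ Gᶜ.IsClique Cᶜ

/-- The splittance of `G`: the least number of edge edits needed to reach a split graph. -/
noncomputable def splittance [Fintype V] (G : SimpleGraph V) : ℕ :=
  sInf { d : ℕ | ∃ H : SimpleGraph V, IsSplit H ∧ editDistance G H = d }

/-- The join `G + K₁` of `G` with one new vertex adjacent to every vertex of `G`. -/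
def joinOne (G : SimpleGraph V) : SimpleGraph (Option V) where
  Adj x y := x ≠ y ∧ ∀ a, x = some a → ∀ b, y = some b → G.Adj a b
  symm := by
    constructor
    rintro x y ⟨hxy, h⟩
    exact ⟨hxy.symm, fun a ha b hb => (h b hb a ha).symm⟩
  loopless := by constructor; rintro x ⟨hxx, -⟩; exact hxx rfl

lemma lapEig_eq [Fintype V] [DecidableEq V] (G : SimpleGraph V) [DecidableRel G.Adj] :
    lapEig G = (lapMatrix_isHermitian G).eigenvalues := by
  unfold lapEig
  congr!

lemma numEdges_eq [Fintype V] [DecidableEq V] (G : SimpleGraph V) [DecidableRel G.Adj]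
    [Fintype G.edgeSet] : numEdges G = G.edgeFinset.card := by
  unfold numEdges
  congr!

lemma sum_lapEig_eq [Fintype V] [DecidableEq V] (G : SimpleGraph V) [DecidableRel G.Adj] :
    ∑ i, lapEig G i = 2 * (numEdges G : ℝ) := by
  classical
  have h : (G.lapMatrix ℝ).trace = ∑ i, (lapMatrix_isHermitian G).eigenvalues i := by
    simpa using (lapMatrix_isHermitian G).trace_eq_sum_eigenvalues
  rw [lapEig_eq, ← h, Matrix.trace]
  have hd : ∀ j, (G.lapMatrix ℝ).diag j = (G.degree j : ℝ) := by
    intro j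
    simp [SimpleGraph.lapMatrix, SimpleGraph.degMatrix, Matrix.diag]
  simp_rw [hd]
  rw [← Nat.cast_sum, SimpleGraph.sum_degrees_eq_twice_card_edges, numEdges_eq]
  push_cast
  ring

lemma lapEig_nonneg [Fintype V] [DecidableEq V] (G : SimpleGraph V) [DecidableRel G.Adj]
    (i : V) : 0 ≤ lapEig G i := by
  rw [lapEig_eq]
  exact (SimpleGraph.posSemidef_lapMatrix ℝ G).eigenvalues_nonneg i

lemma lapEig_le_two_maxDegree [Fintype V] [DecidableEq V] (G : SimpleGraph V)
    [DecidableRel G.Adj] (i : V) : lapEig G i ≤ 2 * (G.maxDegree : ℝ) := by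
  rw [lapEig_eq]
  set μ := (lapMatrix_isHermitian G).eigenvalues i with hμ
  have hev : Module.End.HasEigenvalue (Matrix.toLin' (G.lapMatrix ℝ)) μ := by
    apply Module.End.hasEigenvalue_of_hasEigenvector
      (x := ⇑((lapMatrix_isHermitian G).eigenvectorBasis i))
    constructor
    · rw [Module.End.mem_eigenspace_iff, Matrix.toLin'_apply]
      exact (lapMatrix_isHermitian G).mulVec_eigenvectorBasis i
    · intro h
      apply (lapMatrix_isHermitian G).eigenvectorBasis.toBasis.ne_zero i
      rw [OrthonormalBasis.coe_toBasis]
      ext x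
      exact congrFun h x
  obtain ⟨j, hj⟩ := eigenvalue_mem_ball hev
  rw [Metric.mem_closedBall, Real.dist_eq] at hj
  have hd : (G.lapMatrix ℝ) j j = (G.degree j : ℝ) := by
    simp [SimpleGraph.lapMatrix, SimpleGraph.degMatrix]
  have hs : ∑ l ∈ Finset.univ.erase j, ‖(G.lapMatrix ℝ) j l‖ = (G.degree j : ℝ) := by
    have h1 : ∀ l ∈ Finset.univ.erase j, ‖(G.lapMatrix ℝ) j l‖
        = (if G.Adj j l then (1:ℝ) else 0) := by
      intro l hl
      have hlj : l ≠ j := (Finset.mem_erase.mp hl).1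
      simp [SimpleGraph.lapMatrix, SimpleGraph.degMatrix, Matrix.sub_apply,
        Matrix.diagonal_apply_ne' _ hlj]
      split <;> simp
    rw [Finset.sum_congr rfl h1, Finset.sum_erase _ (by simp), ← SimpleGraph.degree_eq_sum_if_adj]
  rw [hd, hs] at hj
  have hdm : (G.degree j : ℝ) ≤ (G.maxDegree : ℝ) := by
    exact_mod_cast G.degree_le_maxDegree j
  have h2 := (abs_le.mp hj).2
  linarith

lemma two_mul_choose_succ (k : ℕ) : 2 * (k + 1).choose 2 = k * (k + 1) := by
  have h := Nat.choose_two_right (k + 1)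
  have h2 : (k + 1) - 1 = k := rfl
  rw [h2] at h
  obtain ⟨t, ht⟩ := Nat.even_mul_succ_self k
  have hkk : (k + 1) * k = k * (k + 1) := Nat.mul_comm _ _
  omega

/-- `BC_k(G)` holds for every `k ≥ 2Δ + 3`, where `Δ` is the maximum degree. -/
theorem bc_of_maxDegree {V : Type*} [Fintype V] [DecidableEq V] (G : SimpleGraph V)
    [DecidableRel G.Adj] (k : ℕ) (hk : 2 * G.maxDegree + 3 ≤ k)
    (hk2 : k ≤ Fintype.card V) : BC G k := by
  classical
  unfold BC sLap sumKLargest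
  have hnn : (0:ℝ) ≤ (numEdges G : ℝ) + ((k + 1).choose 2 : ℕ) := by positivity
  apply Real.sSup_le _ hnn
  rintro x ⟨T, hT, rfl⟩
  by_cases hm : (numEdges G : ℝ) ≤ ((k + 1).choose 2 : ℕ)
  · have h1 : ∑ i ∈ T, lapEig G i ≤ ∑ i, lapEig G i :=
      Finset.sum_le_sum_of_subset_of_nonneg (Finset.subset_univ T)
        (fun i _ _ => lapEig_nonneg G i)
    rw [sum_lapEig_eq G] at h1
    linarith
  · push_neg at hm
    have h1 : ∑ i ∈ T, lapEig G i ≤ ∑ _i ∈ T, 2 * (G.maxDegree : ℝ) :=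
      Finset.sum_le_sum (fun i _ => lapEig_le_two_maxDegree G i)
    rw [Finset.sum_const, hT, nsmul_eq_mul] at h1
    have h2c : 2 * (((k + 1).choose 2 : ℕ) : ℝ) = (k : ℝ) * ((k : ℝ) + 1) := by
      exact_mod_cast congrArg (Nat.cast : ℕ → ℝ) (two_mul_choose_succ k)
    have hkc : (2 * (G.maxDegree : ℝ) + 3) ≤ (k : ℝ) := by exact_mod_cast hk
    have hk0 : (0:ℝ) ≤ (k : ℝ) := Nat.cast_nonneg k
    nlinarith [mul_le_mul_of_nonneg_left hkc hk0]


end Brouwer
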